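/- arXiv:0709.0142 — 5 statements merged into one kernel-verified Lean document; each statement's English description precedes it below -/
import Mathlib

section
/- For every integer ℓ ≥ 2, G(ℓ) = G(ℓ−1) J_z + ζ(J_z^{ℓ−2}) − (1/λ) J_z^ℓ, where G(ℓ) = (i/λ)(J_x J_z^{ℓ−1} J_y − J_y J_z^{ℓ−1} J_x). -/
open Matrix Complex Kronecker
open scoped ComplexOrder

noncomputable section

/-- spin value j = (d-1)/2 -/
def jr (d : ℕ) : ℝ := ((d : ℝ) - 1) / 2

/-- λ = j(j+1) = (d²-1)/4 -/
def lam (d : ℕ) : ℝ := ((d : ℝ) ^ 2 - 1) / 4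

/-- angular momentum operator J_z -/
def Jz (d : ℕ) : Matrix (Fin d) (Fin d) ℂ :=
  Matrix.diagonal (fun m => ((m : ℂ) - ((d : ℂ) - 1) / 2))

/-- raising operator J_+ -/
def Jp (d : ℕ) : Matrix (Fin d) (Fin d) ℂ :=
  Matrix.of (fun a b : Fin d =>
    if (a : ℕ) = (b : ℕ) + 1 then
      (Real.sqrt (((b : ℕ) + 1) * ((d : ℝ) - 1 - (b : ℕ))) : ℂ)
    else 0)

/-- lowering operator J_- -/
def Jm (d : ℕ) : Matrix (Fin d) (Fin d) ℂ := (Jp d)ᴴ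

/-- J_x -/
def Jx (d : ℕ) : Matrix (Fin d) (Fin d) ℂ := (2 : ℂ)⁻¹ • (Jp d + Jm d)

/-- J_y -/
def Jy (d : ℕ) : Matrix (Fin d) (Fin d) ℂ := (2 * Complex.I)⁻¹ • (Jp d - Jm d)

/-- the superoperator ζ -/
def zeta (d : ℕ) (X : Matrix (Fin d) (Fin d) ℂ) : Matrix (Fin d) (Fin d) ℂ :=
  ((lam d : ℂ))⁻¹ • (Jx d * X * Jx d + Jy d * X * Jy d + Jz d * X * Jz d)

/-- n-fold composition ζ^∘n -/
def zetaIter (d : ℕ) (n : ℕ) (X : Matrix (Fin d) (Fin d) ℂ) : Matrix (Fin d) (Fin d) ℂ :=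
  (zeta d)^[n] X

/-- rotation e^{-iθ J} -/
def rot (d : ℕ) (K : Matrix (Fin d) (Fin d) ℂ) (θ : ℝ) : Matrix (Fin d) (Fin d) ℂ :=
  NormedSpace.exp ((-Complex.I * (θ : ℂ)) • K)

/-- rotation covariance of a linear map with respect to all three generators -/
def RotCovariant (d : ℕ)
    (ξ : Matrix (Fin d) (Fin d) ℂ →ₗ[ℂ] Matrix (Fin d) (Fin d) ℂ) : Prop :=
  ∀ K ∈ ({Jx d, Jy d, Jz d} : Set (Matrix (Fin d) (Fin d) ℂ)), ∀ (θ : ℝ),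
    ∀ X : Matrix (Fin d) (Fin d) ℂ,
      ξ (rot d K θ * X * rot d K (-θ)) = rot d K θ * ξ X * rot d K (-θ)

/-- positivity of a map -/
def PosMap (d : ℕ)
    (ξ : Matrix (Fin d) (Fin d) ℂ →ₗ[ℂ] Matrix (Fin d) (Fin d) ℂ) : Prop :=
  ∀ X : Matrix (Fin d) (Fin d) ℂ, X.PosSemidef → (ξ X).PosSemidef

end

/-- G(ℓ) = (i/λ)(J_x J_z^{ℓ-1} J_y − J_y J_z^{ℓ-1} J_x) -/
noncomputable def Gmap (d : ℕ) (ℓ : ℕ) : Matrix (Fin d) (Fin d) ℂ :=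
  (Complex.I / (lam d : ℂ)) •
    (Jx d * (Jz d) ^ (ℓ - 1) * Jy d - Jy d * (Jz d) ^ (ℓ - 1) * Jx d)


lemma JzJp_comm (d : ℕ) : Jz d * Jp d = Jp d * Jz d + Jp d := by
  ext a b
  simp only [Jz, Jp, Matrix.diagonal_mul, Matrix.mul_diagonal, Matrix.add_apply, Matrix.of_apply]
  split_ifs with h
  · have : (a : ℂ) = (b : ℂ) + 1 := by exact_mod_cast congrArg (Nat.cast : ℕ → ℂ) h
    rw [this]; ring
  · simp

lemma JzJm_comm (d : ℕ) : Jz d * Jm d = Jm d * Jz d - Jm d := by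
  ext a b
  simp only [Jz, Jp, Jm, Matrix.diagonal_mul, Matrix.mul_diagonal, Matrix.sub_apply,
    Matrix.conjTranspose_apply, Matrix.of_apply]
  split_ifs with h
  · have : (b : ℂ) = (a : ℂ) + 1 := by exact_mod_cast congrArg (Nat.cast : ℕ → ℂ) h
    rw [this]; ring
  · simp

lemma JxJz_comm (d : ℕ) : Jx d * Jz d = Jz d * Jx d - Complex.I • Jy d := by
  have h1 : Complex.I * (2 * Complex.I)⁻¹ = (2:ℂ)⁻¹ := by
    rw [mul_inv, ← mul_assoc, mul_comm Complex.I, mul_assoc,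
      mul_inv_cancel₀ Complex.I_ne_zero, mul_one]
  simp only [Jx, Jy, Matrix.smul_mul, Matrix.mul_smul, add_mul, mul_add, sub_mul, mul_sub,
    JzJp_comm, JzJm_comm, smul_smul, h1, smul_add, smul_sub]
  module

lemma JyJz_comm (d : ℕ) : Jy d * Jz d = Jz d * Jy d + Complex.I • Jx d := by
  have h2 : (2 * Complex.I)⁻¹ = -(Complex.I * (2:ℂ)⁻¹) := by
    rw [mul_inv, Complex.inv_I]; ring
  simp only [Jx, Jy, Matrix.smul_mul, Matrix.mul_smul, add_mul, mul_add, sub_mul, mul_sub,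
    JzJp_comm, JzJm_comm, smul_smul, h2, smul_add, smul_sub]
  module

theorem stmt_5 (d : ℕ) (hd : 2 ≤ d) (ℓ : ℕ) (hℓ : 2 ≤ ℓ) :
    Gmap d ℓ = Gmap d (ℓ - 1) * Jz d + zeta d ((Jz d) ^ (ℓ - 2))
      - ((lam d : ℂ))⁻¹ • (Jz d) ^ ℓ := by
  obtain ⟨n, rfl⟩ : ∃ n, ℓ = n + 2 := ⟨ℓ - 2, by omega⟩
  simp only [Gmap, zeta, Nat.add_sub_cancel, show n + 2 - 1 = n + 1 from rfl,
    show n + 2 - 2 = n from rfl, show n + 1 - 1 = n from rfl]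
  have key : (Jx d * (Jz d)^n * Jy d - Jy d * (Jz d)^n * Jx d) * Jz d
      = (Jx d * (Jz d)^(n+1) * Jy d - Jy d * (Jz d)^(n+1) * Jx d)
        + Complex.I • (Jx d * (Jz d)^n * Jx d + Jy d * (Jz d)^n * Jy d) := by
    rw [sub_mul, mul_assoc (Jx d * (Jz d)^n), JyJz_comm, mul_assoc (Jy d * (Jz d)^n), JxJz_comm]
    simp only [mul_add, mul_sub, Matrix.mul_smul, pow_succ, mul_assoc, smul_add]
    abel
  have hC : Jz d * (Jz d)^n * Jz d = (Jz d)^(n+2) := by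
    rw [← pow_succ', ← pow_succ]
  have hII : Complex.I / (lam d : ℂ) * Complex.I = -((lam d : ℂ))⁻¹ := by
    rw [div_eq_mul_inv, mul_right_comm, Complex.I_mul_I, neg_mul, one_mul]
  rw [Matrix.smul_mul, key, hC, smul_add, smul_smul, hII]
  module
end

section
/- For each k ∈ {x,y,z}, the entrywise complex conjugate of the spin-j angular momentum matrix satisfies conj(J_k) = − e^{−iπJ_y} J_k e^{iπJ_y}. -/
open Matrix Complex Kronecker
open scoped ComplexOrder

noncomputable section AuxSpin

open Matrix Complex

variable {d : ℕ}

lemma Jp_conj (a b : Fin d) : (starRingEnd ℂ) (Jp d a b) = Jp d a b := by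
  simp only [Jp, Matrix.of_apply]
  split_ifs
  · exact Complex.conj_ofReal _
  · exact map_zero _

lemma sq_nonneg_entry (c : Fin d) : (0:ℝ) ≤ (((c:ℕ):ℝ)+1) * ((d:ℝ)-1-((c:ℕ):ℝ)) := by
  have h : ((c:ℕ):ℝ) + 1 ≤ (d:ℝ) := by exact_mod_cast c.2
  nlinarith [Nat.cast_nonneg (α := ℝ) (c:ℕ)]

lemma Jp_mul_Jm_eq :
    Jp d * Jm d = Matrix.diagonal (fun a : Fin d => (((a:ℕ):ℂ) * ((d:ℂ) - ((a:ℕ):ℂ)))) := by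
  ext a b
  rw [Matrix.mul_apply]
  have hterm : ∀ c : Fin d, Jp d a c * Jm d c b =
      if ((a:ℕ) = (c:ℕ)+1 ∧ (b:ℕ) = (c:ℕ)+1) then (((a:ℕ):ℂ) * ((d:ℂ) - ((a:ℕ):ℂ))) else 0 := by
    intro c
    simp only [Jm, Matrix.conjTranspose_apply, Jp, Matrix.of_apply]
    by_cases h1 : (a:ℕ) = (c:ℕ)+1 <;> by_cases h2 : (b:ℕ) = (c:ℕ)+1 <;>
      simp [h1, h2]
    rw [← Complex.ofReal_mul, Real.mul_self_sqrt (sq_nonneg_entry c)]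
    push_cast
    ring
  rw [Finset.sum_congr rfl (fun c _ => hterm c)]
  by_cases hex : ∃ c0 : Fin d, (a:ℕ) = (c0:ℕ)+1 ∧ (b:ℕ) = (c0:ℕ)+1
  · obtain ⟨c0, h1, h2⟩ := hex
    have hab : a = b := Fin.ext (by omega)
    rw [Finset.sum_eq_single c0]
    · rw [if_pos ⟨h1, h2⟩, hab, Matrix.diagonal_apply_eq]
    · intro c _ hc
      rw [if_neg]
      rintro ⟨g1, g2⟩
      exact hc (Fin.ext (by omega))
    · intro h; exact absurd (Finset.mem_univ c0) h
  · rw [Finset.sum_eq_zero]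
    · by_cases hab : a = b
      · subst hab
        have ha0 : (a:ℕ) = 0 := by
          by_contra h0
          have hlt := a.2
          exact hex ⟨⟨(a:ℕ)-1, by omega⟩, by simp; omega, by simp; omega⟩
        rw [Matrix.diagonal_apply_eq]
        simp [ha0]
      · rw [Matrix.diagonal_apply_ne _ hab]
    · intro c _
      rw [if_neg]
      rintro ⟨g1, g2⟩
      exact hex ⟨c, g1, g2⟩

lemma Jm_mul_Jp_eq :
    Jm d * Jp d = Matrix.diagonal (fun a : Fin d => ((((a:ℕ):ℂ)+1) * ((d:ℂ) - 1 - ((a:ℕ):ℂ)))) := by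
  ext a b
  rw [Matrix.mul_apply]
  have hterm : ∀ c : Fin d, Jm d a c * Jp d c b =
      if ((c:ℕ) = (a:ℕ)+1 ∧ (c:ℕ) = (b:ℕ)+1) then ((((a:ℕ):ℂ)+1) * ((d:ℂ) - 1 - ((a:ℕ):ℂ))) else 0 := by
    intro c
    simp only [Jm, Matrix.conjTranspose_apply, Jp, Matrix.of_apply]
    by_cases h1 : (c:ℕ) = (a:ℕ)+1 <;> by_cases h2 : (c:ℕ) = (b:ℕ)+1
    · have hab : (a:ℕ) = (b:ℕ) := by omega
      rw [if_pos h1, if_pos h2, if_pos ⟨h1, h2⟩, Complex.star_def, Complex.conj_ofReal]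
      have hba : ((b:ℕ):ℝ) = ((a:ℕ):ℝ) := by exact_mod_cast hab.symm
      rw [hba, ← Complex.ofReal_mul, Real.mul_self_sqrt (sq_nonneg_entry a)]
      push_cast
      ring
    · have hab : (a:ℕ) ≠ (b:ℕ) := by omega
      simp [h1, h2, hab]
    · have hab : (b:ℕ) ≠ (a:ℕ) := by omega
      simp [h1, h2, hab]
    · simp [h1, h2]
  rw [Finset.sum_congr rfl (fun c _ => hterm c)]
  by_cases hex : ∃ c0 : Fin d, (c0:ℕ) = (a:ℕ)+1 ∧ (c0:ℕ) = (b:ℕ)+1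
  · obtain ⟨c0, h1, h2⟩ := hex
    have hab : a = b := Fin.ext (by omega)
    rw [Finset.sum_eq_single c0]
    · rw [if_pos ⟨h1, h2⟩, hab, Matrix.diagonal_apply_eq]
    · intro c _ hc
      rw [if_neg]
      rintro ⟨g1, g2⟩
      exact hc (Fin.ext (by omega))
    · intro h; exact absurd (Finset.mem_univ c0) h
  · rw [Finset.sum_eq_zero]
    · by_cases hab : a = b
      · subst hab
        have ha0 : (a:ℕ) + 1 = d := by
          by_contra h0
          have hlt := a.2
          exact hex ⟨⟨(a:ℕ)+1, by omega⟩, by simp, by simp⟩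
        rw [Matrix.diagonal_apply_eq]
        have : ((a:ℕ):ℂ) + 1 = (d:ℂ) := by exact_mod_cast ha0
        rw [show (d:ℂ) - 1 - ((a:ℕ):ℂ) = 0 by rw [← this]; ring, mul_zero]
      · rw [Matrix.diagonal_apply_ne _ hab]
    · intro c _
      rw [if_neg]
      rintro ⟨g1, g2⟩
      exact hex ⟨c, g1, g2⟩

lemma ladder_comm : Jp d * Jm d - Jm d * Jp d = (2:ℂ) • Jz d := by
  rw [Jp_mul_Jm_eq, Jm_mul_Jp_eq, Jz]
  ext a b
  rcases eq_or_ne a b with rfl | h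
  · simp only [Matrix.sub_apply, Matrix.diagonal_apply_eq, Matrix.smul_apply, smul_eq_mul]
    push_cast
    ring
  · simp [Matrix.diagonal_apply_ne _ h]

lemma Jz_comm_Jp : Jz d * Jp d - Jp d * Jz d = Jp d := by
  ext a b
  rw [Matrix.sub_apply, Jz, Matrix.diagonal_mul, Matrix.mul_diagonal]
  simp only [Jp, Matrix.of_apply]
  split_ifs with h
  · have : (a : ℂ) = (b : ℂ) + 1 := by exact_mod_cast h
    rw [this]; ring
  · ring

lemma Jz_comm_Jm : Jz d * Jm d - Jm d * Jz d = -(Jm d) := by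
  ext a b
  rw [Matrix.sub_apply, Jz, Matrix.diagonal_mul, Matrix.mul_diagonal]
  simp only [Jm, Matrix.conjTranspose_apply, Jp, Matrix.of_apply, Matrix.neg_apply]
  split_ifs with h
  · have : (b : ℂ) = (a : ℂ) + 1 := by exact_mod_cast h
    rw [this]; ring
  · simp

end AuxSpin

noncomputable section AuxSpin2

open Matrix Complex

variable {d : ℕ}

lemma comm_yx : Jy d * Jx d - Jx d * Jy d = (-Complex.I) • Jz d := by
  have expand : Jy d * Jx d - Jx d * Jy d
      = ((2*Complex.I)⁻¹ * 2⁻¹) • ((Jp d - Jm d) * (Jp d + Jm d) - (Jp d + Jm d) * (Jp d - Jm d)) := by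
    rw [Jy, Jx, smul_mul_assoc, mul_smul_comm, smul_mul_assoc, mul_smul_comm, smul_smul, smul_smul,
      mul_comm ((2:ℂ)⁻¹) ((2*Complex.I)⁻¹), smul_sub]
  have e2 : (Jp d - Jm d) * (Jp d + Jm d) - (Jp d + Jm d) * (Jp d - Jm d)
      = (2:ℂ) • (Jp d * Jm d - Jm d * Jp d) := by
    rw [two_smul]; noncomm_ring
  rw [expand, e2, ladder_comm, smul_smul, smul_smul]
  congr 1
  rw [mul_inv, Complex.inv_I]
  ring
  
lemma comm_yz : Jy d * Jz d - Jz d * Jy d = Complex.I • Jx d := by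
  have expand : Jy d * Jz d - Jz d * Jy d
      = (2*Complex.I)⁻¹ • ((Jp d - Jm d) * Jz d - Jz d * (Jp d - Jm d)) := by
    rw [Jy, smul_mul_assoc, mul_smul_comm, smul_sub]
  have e2 : (Jp d - Jm d) * Jz d - Jz d * (Jp d - Jm d)
      = -(Jz d * Jp d - Jp d * Jz d) + (Jz d * Jm d - Jm d * Jz d) := by
    noncomm_ring
  rw [expand, e2, Jz_comm_Jp, Jz_comm_Jm, Jx, smul_smul]
  rw [show -(Jp d) + -(Jm d) = (-1 : ℂ) • (Jp d + Jm d) by rw [neg_one_smul, neg_add]]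
  rw [smul_smul]
  congr 1
  rw [mul_inv, Complex.inv_I]
  ring

/-- the matrix A = -i J_y -/
def Ay (d : ℕ) : Matrix (Fin d) (Fin d) ℂ := (-Complex.I) • Jy d

lemma commAx : Ay d * Jx d - Jx d * Ay d = -(Jz d) := by
  rw [Ay, smul_mul_assoc, mul_smul_comm, ← smul_sub, comm_yx, smul_smul]
  rw [show (-Complex.I) * (-Complex.I) = (-1:ℂ) by rw [neg_mul_neg, Complex.I_mul_I]]
  rw [neg_one_smul]

lemma commAz : Ay d * Jz d - Jz d * Ay d = Jx d := by
  rw [Ay, smul_mul_assoc, mul_smul_comm, ← smul_sub, comm_yz, smul_smul]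
  rw [show (-Complex.I) * Complex.I = (1:ℂ) by rw [neg_mul, Complex.I_mul_I, neg_neg]]
  rw [one_smul]

lemma conj_Jx : (Jx d).map (starRingEnd ℂ) = Jx d := by
  ext a b
  simp only [Matrix.map_apply, Jx, Matrix.smul_apply, Matrix.add_apply, Jm,
    Matrix.conjTranspose_apply, smul_eq_mul, _root_.map_mul, _root_.map_add, map_inv₀, map_ofNat,
    Complex.star_def, Jp_conj, Complex.conj_conj]

lemma conj_Jz : (Jz d).map (starRingEnd ℂ) = Jz d := by
  ext a b
  simp only [Matrix.map_apply, Jz, Matrix.diagonal_apply]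
  split_ifs
  · have h2 : ((a:ℂ) - ((d:ℂ)-1)/2) = (((((a:ℕ):ℝ) - ((d:ℝ)-1)/2 : ℝ)) : ℂ) := by
      push_cast; ring
    rw [h2, Complex.conj_ofReal]
  · exact map_zero _

lemma conj_Jy : (Jy d).map (starRingEnd ℂ) = -(Jy d) := by
  ext a b
  simp only [Matrix.map_apply, Jy, Matrix.smul_apply, Matrix.sub_apply, Jm,
    Matrix.conjTranspose_apply, smul_eq_mul, _root_.map_mul, _root_.map_sub, map_inv₀, map_ofNat,
    Complex.star_def, Jp_conj, Complex.conj_conj, Complex.conj_I, inv_neg, Matrix.neg_apply]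
  ring

end AuxSpin2

noncomputable section AuxExp

open Matrix Complex NormedSpace

attribute [local instance] Matrix.linftyOpNormedRing Matrix.linftyOpNormedAlgebra

lemma hasDerivAt_comp_ofReal' {E : Type*} [NormedAddCommGroup E] [NormedSpace ℂ E]
    {f : ℂ → E} {f' : E} {z : ℝ} (hf : HasDerivAt f f' (z : ℂ)) :
    HasDerivAt (fun y : ℝ => f (y : ℂ)) f' z := by
  simpa [Function.comp_def] using HasDerivAt.scomp (𝕜 := ℝ) (𝕜' := ℂ) z hf Complex.ofRealCLM.hasDerivAt

lemma rot_pi_aux (d : ℕ) (P Q : Matrix (Fin d) (Fin d) ℂ)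
    (hP : Ay d * P - P * Ay d = -Q) (hQ : Ay d * Q - Q * Ay d = P) :
    exp ((Real.pi : ℂ) • Ay d) * P * exp ((Real.pi : ℂ) • (-(Ay d))) = -P := by
  set A := Ay d with hA
  set F : ℝ → Matrix (Fin d) (Fin d) ℂ := fun θ =>
    exp ((θ:ℂ) • A) * (Real.cos θ • P + Real.sin θ • Q) * exp ((θ:ℂ) • (-A)) with hFdef
  have hderiv : ∀ θ : ℝ, HasDerivAt F 0 θ := by
    intro θ
    have hu : HasDerivAt (fun t : ℝ => exp ((t:ℂ) • A)) (A * exp ((θ:ℂ) • A)) θ :=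
      hasDerivAt_comp_ofReal' (f := fun u : ℂ => NormedSpace.exp (u • A))
        (hasDerivAt_exp_smul_const' (𝕂 := ℂ) A ((θ:ℝ):ℂ))
    have hv : HasDerivAt (fun t : ℝ => exp ((t:ℂ) • (-A))) (exp ((θ:ℂ) • (-A)) * (-A)) θ :=
      hasDerivAt_comp_ofReal' (f := fun u : ℂ => NormedSpace.exp (u • (-A)))
        (hasDerivAt_exp_smul_const (𝕂 := ℂ) (-A) ((θ:ℝ):ℂ))
    have hm : HasDerivAt (fun t : ℝ => Real.cos t • P + Real.sin t • Q)
        ((-Real.sin θ) • P + Real.cos θ • Q) θ :=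
      ((Real.hasDerivAt_cos θ).smul_const P).add ((Real.hasDerivAt_sin θ).smul_const Q)
    have h := (hu.mul hm).mul hv
    convert h using 1
    case e'_4 => rfl
    case e'_5 => rfl
    case e'_6 => rfl
    case e'_8 => rfl
    set u := exp ((θ:ℂ) • A) with hu'
    set v := exp ((θ:ℂ) • (-A)) with hv'
    set M := Real.cos θ • P + Real.sin θ • Q with hM
    set M' := (-Real.sin θ) • P + Real.cos θ • Q with hM'
    have hAu : A * u = u * A := (((Commute.refl A).smul_left ((θ:ℂ))).exp_left).symm.eq
    have hAv : (-A) * v = v * (-A) := (((Commute.refl (-A)).smul_left ((θ:ℂ))).exp_left).symm.eq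
    have hkey : A * M - M * A + M' = 0 := by
      have h1 : A * M - M * A
          = Real.cos θ • (A*P - P*A) + Real.sin θ • (A*Q - Q*A) := by
        rw [hM]
        simp only [mul_add, add_mul, mul_smul_comm, smul_mul_assoc, smul_sub]
        abel
      rw [h1, hP, hQ, hM']
      module
    have hexpand : (A * u * M + u * M') * v + u * M * (v * -A)
        = u * (A * M - M * A + M') * v := by
      rw [hAu, ← hAv]
      noncomm_ring
    rw [show ((fun t : ℝ => exp ((t:ℂ) • A)) * fun t : ℝ => Real.cos t • P + Real.sin t • Q) θ = u * M from rfl]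
    rw [hexpand, hkey, mul_zero, zero_mul]
  have hdiff : Differentiable ℝ F := fun θ => (hderiv θ).differentiableAt
  have hconst := is_const_of_deriv_eq_zero hdiff (fun θ => (hderiv θ).deriv) Real.pi 0
  have hF0 : F 0 = P := by
    simp [hFdef]
  have hFpi : F Real.pi = -(exp ((Real.pi:ℂ) • A) * P * exp ((Real.pi:ℂ) • (-A))) := by
    simp only [hFdef, Real.cos_pi, Real.sin_pi, zero_smul, add_zero, neg_smul, one_smul,
      mul_neg, neg_mul]
  have hr : exp ((Real.pi:ℂ) • A) * P * exp ((Real.pi:ℂ) • (-A)) = -(F Real.pi) := by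
    rw [hFpi, neg_neg]
  rw [hr, hconst, hF0]

lemma rot_pi_y_aux (d : ℕ) :
    exp ((Real.pi : ℂ) • Ay d) * Jy d * exp ((Real.pi : ℂ) • (-(Ay d))) = Jy d := by
  have hc : Commute ((Real.pi:ℂ) • Ay d) (Jy d) :=
    ((Commute.refl (Jy d)).smul_left (-Complex.I)).smul_left ((Real.pi:ℝ):ℂ)
  have h1 : exp ((Real.pi:ℂ) • Ay d) * Jy d = Jy d * exp ((Real.pi:ℂ) • Ay d) :=
    (hc.exp_left).eq
  have hcc : Commute ((Real.pi:ℂ) • Ay d) ((Real.pi:ℂ) • (-(Ay d))) :=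
    (((Commute.refl (Ay d)).neg_right).smul_left _).smul_right _
  rw [h1, mul_assoc, ← Matrix.exp_add_of_commute _ _ hcc]
  rw [show (Real.pi:ℂ) • Ay d + (Real.pi:ℂ) • (-(Ay d)) = 0 by rw [smul_neg, add_neg_cancel]]
  rw [NormedSpace.exp_zero, mul_one]

end AuxExp

theorem stmt_14 (d : ℕ) (hd : 2 ≤ d) :
    ∀ K ∈ ({Jx d, Jy d, Jz d} : Set (Matrix (Fin d) (Fin d) ℂ)),
      K.map (starRingEnd ℂ) =
        -(NormedSpace.exp ((-Complex.I * (Real.pi : ℂ)) • Jy d) * K *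
          NormedSpace.exp ((Complex.I * (Real.pi : ℂ)) • Jy d)) := by
  intro K hK
  have hA1 : (-Complex.I * (Real.pi:ℂ)) • Jy d = (Real.pi:ℂ) • Ay d := by
    rw [Ay, smul_smul]; congr 1; ring
  have hA2 : (Complex.I * (Real.pi:ℂ)) • Jy d = (Real.pi:ℂ) • (-(Ay d)) := by
    rw [Ay, neg_smul, neg_neg, smul_smul]; congr 1; ring
  rw [hA1, hA2]
  simp only [Set.mem_insert_iff, Set.mem_singleton_iff] at hK
  rcases hK with rfl | rfl | rfl
  · have h : NormedSpace.exp ((Real.pi:ℂ) • Ay d) * Jx d *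
        NormedSpace.exp ((Real.pi:ℂ) • (-(Ay d))) = -(Jx d) :=
      rot_pi_aux d (Jx d) (Jz d) commAx commAz
    rw [conj_Jx, h, neg_neg]
  · have h : NormedSpace.exp ((Real.pi:ℂ) • Ay d) * Jy d *
        NormedSpace.exp ((Real.pi:ℂ) • (-(Ay d))) = Jy d := rot_pi_y_aux d
    rw [conj_Jy, h]
  · have hQ : Ay d * (-(Jx d)) - (-(Jx d)) * Ay d = Jz d := by
      have h := commAx (d := d)
      have : Ay d * (-(Jx d)) - (-(Jx d)) * Ay d = -(Ay d * Jx d - Jx d * Ay d) := by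
        noncomm_ring
      rw [this, h, neg_neg]
    have hP : Ay d * Jz d - Jz d * Ay d = -(-(Jx d)) := by rw [neg_neg]; exact commAz
    have h : NormedSpace.exp ((Real.pi:ℂ) • Ay d) * Jz d *
        NormedSpace.exp ((Real.pi:ℂ) • (-(Ay d))) = -(Jz d) :=
      rot_pi_aux d (Jz d) (-(Jx d)) hP hQ
    rw [conj_Jz, h, neg_neg]
end

section
/- Let P = e_{d−1} e_{d−1}† be the rank-one projector onto the highest-weight state |j,j⟩. Then for every integer n with 0 ≤ n < d−1, the (0,0) entry of ζ^{∘n}(P) (i.e., its matrix element on the lowest-weight state |j,−j⟩) equals 0, while the (0,0) entry of ζ^{∘(d−1)}(P) is a strictly positive real number. -/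
open Matrix Complex Kronecker
open scoped ComplexOrder

noncomputable section Aux
variable {d : ℕ}

lemma Jp_apply' (a b : Fin d) :
    Jp d a b = if (a : ℕ) = (b : ℕ) + 1 then
      ((Real.sqrt (((b : ℕ) + 1) * ((d : ℝ) - 1 - (b : ℕ))) : ℝ) : ℂ) else 0 := rfl

lemma Jm_apply' (a b : Fin d) :
    Jm d a b = if (b : ℕ) = (a : ℕ) + 1 then
      ((Real.sqrt (((a : ℕ) + 1) * ((d : ℝ) - 1 - (a : ℕ))) : ℝ) : ℂ) else 0 := by
  rw [Jm, conjTranspose_apply, Jp_apply']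
  split <;> simp

lemma mix (d : ℕ) (X : Matrix (Fin d) (Fin d) ℂ) :
    Jx d * X * Jx d + Jy d * X * Jy d
      = (2:ℂ)⁻¹ • (Jp d * X * Jm d + Jm d * X * Jp d) := by
  have hI : ((2 * Complex.I)⁻¹ * (2 * Complex.I)⁻¹ : ℂ) = -(4⁻¹) := by
    rw [← mul_inv]
    have h2 : (2 * Complex.I) * (2 * Complex.I) = -4 := by
      rw [mul_mul_mul_comm, Complex.I_mul_I]; norm_num
    rw [h2, inv_neg]
  have h4 : ((2:ℂ)⁻¹ * 2⁻¹) = 4⁻¹ := by norm_num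
  unfold Jx Jy
  simp only [smul_mul_assoc, mul_smul_comm, smul_smul, add_mul, mul_add,
    sub_mul, mul_sub, hI, h4]
  match_scalars <;> · ring_nf; norm_num [Complex.I_sq]

lemma mul_mul_apply' (A X B : Matrix (Fin d) (Fin d) ℂ) (a b : Fin d) :
    (A * X * B) a b = ∑ a', ∑ b', A a a' * X a' b' * B b' b := by
  rw [Matrix.mul_apply]
  simp_rw [Matrix.mul_apply, Finset.sum_mul]
  exact Finset.sum_comm

lemma zeta_apply_entry (X : Matrix (Fin d) (Fin d) ℂ) (a b : Fin d) :
    zeta d X a b = ((lam d : ℝ) : ℂ)⁻¹ *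
      ((2:ℂ)⁻¹ * ((Jp d * X * Jm d) a b + (Jm d * X * Jp d) a b)
        + (((a:ℕ):ℂ) - ((d:ℂ)-1)/2) * X a b * (((b:ℕ):ℂ) - ((d:ℂ)-1)/2)) := by
  rw [zeta, mix d X]
  simp only [Matrix.smul_apply, Matrix.add_apply, smul_eq_mul, Jz,
    Matrix.mul_diagonal, Matrix.diagonal_mul]

/-- support predicate: all entries with an index below `t` vanish -/
def Supp (d t : ℕ) (X : Matrix (Fin d) (Fin d) ℂ) : Prop :=
  ∀ a b : Fin d, ((a:ℕ) < t ∨ (b:ℕ) < t) → X a b = 0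

lemma supp_step (t : ℕ) (X : Matrix (Fin d) (Fin d) ℂ) (hX : Supp d t X) :
    Supp d (t-1) (zeta d X) := by
  intro a b hab
  rw [zeta_apply_entry]
  have h1 : (Jp d * X * Jm d) a b = 0 := by
    rw [mul_mul_apply']
    apply Finset.sum_eq_zero; intro a' _
    apply Finset.sum_eq_zero; intro b' _
    rw [Jp_apply', Jm_apply']
    by_cases ha : (a:ℕ) = (a':ℕ) + 1
    · by_cases hb : (b:ℕ) = (b':ℕ) + 1
      · rw [hX a' b' (by omega)]; ring
      · simp [hb]
    · simp [ha]
  have h2 : (Jm d * X * Jp d) a b = 0 := by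
    rw [mul_mul_apply']
    apply Finset.sum_eq_zero; intro a' _
    apply Finset.sum_eq_zero; intro b' _
    rw [Jp_apply', Jm_apply']
    by_cases ha : (a':ℕ) = (a:ℕ) + 1
    · by_cases hb : (b':ℕ) = (b:ℕ) + 1
      · rw [hX a' b' (by omega)]; ring
      · simp [hb]
    · simp [ha]
  rw [h1, h2, hX a b (by omega)]
  ring

lemma corner_step (t : ℕ) (ht1 : 1 ≤ t) (ht2 : t < d)
    (X : Matrix (Fin d) (Fin d) ℂ) (hX : Supp d t X) :
    zeta d X ⟨t-1, by omega⟩ ⟨t-1, by omega⟩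
      = (((lam d)⁻¹ * 2⁻¹ * ((t:ℝ) * ((d:ℝ) - t)) : ℝ) : ℂ)
        * X ⟨t, ht2⟩ ⟨t, ht2⟩ := by
  suffices H : ∀ a0 c0 : Fin d, (a0:ℕ) = t-1 → (c0:ℕ) = t →
      zeta d X a0 a0 = (((lam d)⁻¹ * 2⁻¹ * ((t:ℝ) * ((d:ℝ) - t)) : ℝ) : ℂ)
        * X c0 c0 from H _ _ rfl rfl
  intro a0 c0 hA hC
  have hcast : ((t-1:ℕ):ℝ) = (t:ℝ) - 1 := by
    push_cast [Nat.cast_sub ht1]; ring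
  rw [zeta_apply_entry]
  have h1 : (Jp d * X * Jm d) a0 a0 = 0 := by
    rw [mul_mul_apply']
    apply Finset.sum_eq_zero; intro a' _
    apply Finset.sum_eq_zero; intro b' _
    rw [Jp_apply']
    by_cases ha : (a0:ℕ) = (a':ℕ) + 1
    · rw [hX a' b' (by omega)]; ring
    · simp [ha]
  have h2 : (Jm d * X * Jp d) a0 a0
      = (((t:ℝ) * ((d:ℝ) - t) : ℝ) : ℂ) * X c0 c0 := by
    rw [mul_mul_apply']
    rw [Finset.sum_eq_single c0 (fun a' _ ha' => by
        apply Finset.sum_eq_zero; intro b' _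
        rw [Jm_apply', if_neg (fun h => ha' (Fin.ext (by omega)))]
        ring)
      (fun h => absurd (Finset.mem_univ _) h)]
    rw [Finset.sum_eq_single c0 (fun b' _ hb' => by
        rw [Jp_apply', if_neg (fun h => hb' (Fin.ext (by omega)))]
        ring)
      (fun h => absurd (Finset.mem_univ _) h)]
    rw [Jm_apply', Jp_apply', if_pos (show (c0:ℕ) = (a0:ℕ)+1 by omega), hA, hcast]
    rw [show ((t:ℝ) - 1 + 1) * ((d:ℝ) - 1 - ((t:ℝ) - 1)) = (t:ℝ) * ((d:ℝ) - t)
      from by ring]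
    rw [mul_comm _ ((Real.sqrt ((t:ℝ) * ((d:ℝ) - t)) : ℂ)), ← mul_assoc,
      ← Complex.ofReal_mul,
      Real.mul_self_sqrt (by
        have h1 : (0:ℝ) ≤ (t:ℝ) := by positivity
        have h2 : (t:ℝ) ≤ (d:ℝ) := by exact_mod_cast ht2.le
        nlinarith)]
  have h3 : X a0 a0 = 0 := hX _ _ (by omega)
  rw [h1, h2, h3]
  push_cast
  ring
end Aux

theorem stmt_15 (d : ℕ) (hd : 2 ≤ d) :
    (∀ n : ℕ, n < d - 1 →
      zetaIter d n (Matrix.single (⟨d - 1, by omega⟩ : Fin d)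
          (⟨d - 1, by omega⟩ : Fin d) (1 : ℂ))
        (⟨0, by omega⟩ : Fin d) (⟨0, by omega⟩ : Fin d) = 0) ∧
    (∃ r : ℝ, 0 < r ∧
      zetaIter d (d - 1) (Matrix.single (⟨d - 1, by omega⟩ : Fin d)
          (⟨d - 1, by omega⟩ : Fin d) (1 : ℂ))
        (⟨0, by omega⟩ : Fin d) (⟨0, by omega⟩ : Fin d) = (r : ℂ)) := by
  set P : Matrix (Fin d) (Fin d) ℂ :=
    Matrix.single (⟨d - 1, by omega⟩ : Fin d) (⟨d - 1, by omega⟩ : Fin d) (1 : ℂ)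
    with hP
  have key : ∀ n : ℕ, n ≤ d - 1 →
      Supp d (d-1-n) (zetaIter d n P) ∧
      ∃ r : ℝ, 0 < r ∧ ∀ (h : d-1-n < d),
        zetaIter d n P ⟨d-1-n, h⟩ ⟨d-1-n, h⟩ = (r:ℂ) := by
    intro n
    induction n with
    | zero =>
      intro _
      constructor
      · intro a b hab
        show P a b = 0
        rw [hP, Matrix.single]
        simp only [Matrix.of_apply]
        rw [if_neg]
        rintro ⟨h1, h2⟩
        have e1 : d - 1 = (a:ℕ) := congrArg Fin.val h1
        have e2 : d - 1 = (b:ℕ) := congrArg Fin.val h2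
        omega
      · refine ⟨1, one_pos, fun h => ?_⟩
        show P _ _ = _
        rw [hP, Matrix.single]
        simp only [Matrix.of_apply]
        rw [if_pos ⟨Fin.ext (show d-1 = d-1-0 by omega), Fin.ext (show d-1 = d-1-0 by omega)⟩]
        norm_num
    | succ n ih =>
      intro hn
      obtain ⟨hS, r, hr, hv⟩ := ih (by omega)
      have ht1 : 1 ≤ d - 1 - n := by omega
      have ht2 : d - 1 - n < d := by omega
      have hit : zetaIter d (n+1) P = zeta d (zetaIter d n P) :=
        Function.iterate_succ_apply' _ _ _
      constructor
      · rw [show d-1-(n+1) = (d-1-n)-1 from by omega, hit]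
        exact supp_step _ _ hS
      · refine ⟨(lam d)⁻¹ * 2⁻¹ * (((d-1-n:ℕ):ℝ) * ((d:ℝ) - (d-1-n:ℕ))) * r,
          ?_, fun h => ?_⟩
        · have hd2 : (2:ℝ) ≤ (d:ℝ) := by exact_mod_cast hd
          have hlam : 0 < lam d := by rw [lam]; nlinarith
          have h1 : (0:ℝ) < ((d-1-n:ℕ):ℝ) := by exact_mod_cast ht1
          have h2 : ((d-1-n:ℕ):ℝ) < (d:ℝ) := by exact_mod_cast ht2
          have h3 : (0:ℝ) < (d:ℝ) - ((d-1-n:ℕ):ℝ) := by linarith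
          exact mul_pos (mul_pos (mul_pos (inv_pos.mpr hlam) (by norm_num))
            (mul_pos h1 h3)) hr
        · rw [hit]
          rw [show (⟨d-1-(n+1), h⟩ : Fin d) = (⟨(d-1-n)-1, by omega⟩ : Fin d)
            from Fin.ext (show d-1-(n+1) = d-1-n-1 by omega)]
          rw [corner_step (d-1-n) ht1 ht2 _ hS, hv ht2]
          push_cast
          ring
  constructor
  · intro n hn
    obtain ⟨hS, _⟩ := key n (by omega)
    exact hS _ _ (Or.inl (show 0 < d-1-n by omega))
  · obtain ⟨_, r, hr, hv⟩ := key (d-1) le_rfl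
    refine ⟨r, hr, ?_⟩
    have := hv (by omega)
    simp only [Nat.sub_self] at this
    exact this
end

section
/- For every d×d complex matrix ρ, Tr₂[ Π_+ (ρ ⊗ I₂/2) Π_+ + Π_− (ρ ⊗ I₂/2) Π_− ] = (½ + 1/(2(2j+1)²)) ρ + (2j(j+1)/(2j+1)²) ζ(ρ), where Tr₂ denotes the partial trace over the second (spin-½) factor, defined by (Tr₂ M)_{a,b} = Σ_c M_{(a,c),(b,c)}. -/
open Matrix Complex Kronecker
open scoped ComplexOrder

/-- total angular momentum squared 𝒥² on ℂ^d ⊗ ℂ² -/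
noncomputable def J2half (d : ℕ) : Matrix (Fin d × Fin 2) (Fin d × Fin 2) ℂ :=
  (Jx d ⊗ₖ (1 : Matrix (Fin 2) (Fin 2) ℂ) + (1 : Matrix (Fin d) (Fin d) ℂ) ⊗ₖ Jx 2) ^ 2
  + (Jy d ⊗ₖ (1 : Matrix (Fin 2) (Fin 2) ℂ) + (1 : Matrix (Fin d) (Fin d) ℂ) ⊗ₖ Jy 2) ^ 2
  + (Jz d ⊗ₖ (1 : Matrix (Fin 2) (Fin 2) ℂ) + (1 : Matrix (Fin d) (Fin d) ℂ) ⊗ₖ Jz 2) ^ 2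

/-- projector onto total angular momentum j + 1/2 -/
noncomputable def PiPlus (d : ℕ) : Matrix (Fin d × Fin 2) (Fin d × Fin 2) ℂ :=
  ((2 * jr d + 1 : ℝ) : ℂ)⁻¹ •
    (J2half d - (((jr d - 1 / 2) * (jr d + 1 / 2) : ℝ) : ℂ) •
      (1 : Matrix (Fin d × Fin 2) (Fin d × Fin 2) ℂ))

/-- projector onto total angular momentum j - 1/2 -/
noncomputable def PiMinus (d : ℕ) : Matrix (Fin d × Fin 2) (Fin d × Fin 2) ℂ :=
  1 - PiPlus d

/-- partial trace over the second factor -/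
noncomputable def ptrace2 (d : ℕ) (M : Matrix (Fin d × Fin 2) (Fin d × Fin 2) ℂ) :
    Matrix (Fin d) (Fin d) ℂ :=
  Matrix.of (fun a b : Fin d => ∑ c : Fin 2, M (a, c) (b, c))


/-! ### Auxiliary lemmas -/

section Aux
open Matrix Complex Kronecker

lemma aux_JpJm (d : ℕ) :
    Jp d * Jm d = Matrix.diagonal (fun a : Fin d => (a : ℂ) * ((d : ℂ) - a)) := by
  ext a b
  simp only [Jm, Jp, mul_apply, conjTranspose_apply, of_apply, diagonal_apply,
    apply_ite (star : ℂ → ℂ), star_zero, RCLike.star_def, Complex.conj_ofReal]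
  by_cases hab : a = b
  · subst hab
    rw [if_pos rfl]
    by_cases ha : (a : ℕ) = 0
    · rw [Finset.sum_eq_zero fun c _ => by rw [if_neg (by omega), zero_mul]]
      have h0 : ((a:ℕ) : ℂ) = 0 := by exact_mod_cast congrArg (Nat.cast : ℕ → ℂ) ha
      rw [h0]; ring
    · have hkd : (a : ℕ) - 1 < d := lt_of_le_of_lt (Nat.sub_le _ _) a.isLt
      rw [Finset.sum_eq_single (⟨(a : ℕ) - 1, hkd⟩ : Fin d)]
      · simp only [Fin.val_mk]
        rw [if_pos (by omega)]
        have hnn : (0:ℝ) ≤ (((a:ℕ) - 1 : ℕ) + 1) * ((d : ℝ) - 1 - ((a:ℕ) - 1 : ℕ)) := by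
          apply mul_nonneg (by positivity)
          have : (((a:ℕ) - 1 : ℕ):ℝ) + 1 ≤ d := by exact_mod_cast hkd
          linarith
        rw [← Complex.ofReal_mul, Real.mul_self_sqrt hnn]
        have hac : ((a:ℕ) : ℂ) = (((a:ℕ) - 1 : ℕ) : ℂ) + 1 := by
          have : (a:ℕ) = ((a:ℕ) - 1) + 1 := by omega
          exact_mod_cast this
        push_cast
        rw [hac]; ring
      · intro c _ hc
        rw [if_neg fun h => hc (Fin.ext (by simp only [Fin.val_mk]; omega)), zero_mul]
      · intro h; exact absurd (Finset.mem_univ _) h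
  · rw [if_neg hab, Finset.sum_eq_zero]
    intro c _
    by_cases h1 : (a:ℕ) = (c:ℕ) + 1
    · rw [if_neg (fun h : (b:ℕ) = (c:ℕ)+1 => hab (Fin.ext (by omega))), mul_zero]
    · rw [if_neg h1, zero_mul]

lemma aux_JmJp (d : ℕ) :
    Jm d * Jp d
      = Matrix.diagonal (fun a : Fin d => ((a : ℂ) + 1) * ((d : ℂ) - 1 - a)) := by
  ext a b
  simp only [Jm, Jp, mul_apply, conjTranspose_apply, of_apply, diagonal_apply,
    apply_ite (star : ℂ → ℂ), star_zero, RCLike.star_def, Complex.conj_ofReal]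
  by_cases hab : a = b
  · subst hab
    rw [if_pos rfl]
    by_cases ha : (a : ℕ) + 1 < d
    · rw [Finset.sum_eq_single (⟨(a : ℕ) + 1, ha⟩ : Fin d)]
      · simp only [Fin.val_mk, if_pos, ite_true]
        have hnn : (0:ℝ) ≤ ((a:ℕ) + 1) * ((d : ℝ) - 1 - (a:ℕ)) := by
          apply mul_nonneg (by positivity)
          have : ((a:ℕ):ℝ) + 1 ≤ d := by exact_mod_cast ha.le
          linarith
        rw [← Complex.ofReal_mul, Real.mul_self_sqrt hnn]
        push_cast; ring
      · intro c _ hc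
        rw [if_neg fun h => hc (Fin.ext (by simp only [Fin.val_mk]; omega)), mul_zero]
      · intro h; exact absurd (Finset.mem_univ _) h
    · have h1 : ((a:ℕ) : ℂ) = (d:ℂ) - 1 := by
        have ha' : (a : ℕ) = d - 1 := by omega
        have hd1 : 1 ≤ d := by have := a.isLt; omega
        rw [ha', Nat.cast_sub hd1, Nat.cast_one]
      rw [Finset.sum_eq_zero fun c _ => by rw [if_neg (by omega), mul_zero], h1]
      ring
  · rw [if_neg hab, Finset.sum_eq_zero]
    intro c _
    by_cases h1 : (c:ℕ) = (a:ℕ) + 1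
    · rw [if_neg (fun h : (c:ℕ) = (b:ℕ)+1 => hab (Fin.ext (by omega))), mul_zero]
    · rw [if_neg h1, zero_mul]

lemma aux_xy_sq (d : ℕ) :
    Jx d * Jx d + Jy d * Jy d = (2:ℂ)⁻¹ • (Jp d * Jm d + Jm d * Jp d) := by
  have hI : (2 * Complex.I)⁻¹ * (2 * Complex.I)⁻¹ = -(4:ℂ)⁻¹ := by
    have h4 : (2 * Complex.I) * (2 * Complex.I) = -4 := by
      have h := Complex.I_mul_I
      linear_combination 4 * h
    rw [← mul_inv, h4, inv_neg]
  have h2 : (2:ℂ)⁻¹ * 2⁻¹ = (4:ℂ)⁻¹ := by norm_num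
  simp only [Jx, Jy, add_mul, mul_add, sub_mul, mul_sub, smul_mul_assoc, mul_smul_comm,
    smul_add, smul_sub, smul_smul, hI, h2]
  module

lemma aux_casimir (d : ℕ) :
    Jx d * Jx d + Jy d * Jy d + Jz d * Jz d = ((lam d : ℝ) : ℂ) • 1 := by
  rw [aux_xy_sq, aux_JpJm, aux_JmJp]
  ext a b
  by_cases hab : a = b
  · subst hab
    simp only [Jz, diagonal_mul_diagonal, Matrix.add_apply, Matrix.smul_apply,
      diagonal_apply_eq, Matrix.one_apply_eq, smul_eq_mul, Pi.add_apply, lam]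
    push_cast
    ring
  · simp [Jz, diagonal_mul_diagonal, diagonal_apply_ne _ hab, Matrix.one_apply_ne hab]

lemma aux_Jx2 : Jx 2 = !![0, 2⁻¹; 2⁻¹, 0] := by
  ext a b
  fin_cases a <;> fin_cases b <;>
    simp [Jx, Jp, Jm, conjTranspose_apply, Matrix.of_apply] <;> norm_num

lemma aux_Jy2 : Jy 2 = !![0, Complex.I / 2; -(Complex.I / 2), 0] := by
  ext a b
  fin_cases a <;> fin_cases b <;>
    simp [Jy, Jp, Jm, conjTranspose_apply, Matrix.of_apply] <;>
    norm_num <;> field_simp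

lemma aux_Jz2 : Jz 2 = !![-(2⁻¹ : ℂ), 0; 0, 2⁻¹] := by
  ext a b
  fin_cases a <;> fin_cases b <;> norm_num [Jz, Matrix.diagonal_apply]

/-- partial trace of a sum -/
lemma ptrace2_add (d : ℕ) (M N : Matrix (Fin d × Fin 2) (Fin d × Fin 2) ℂ) :
    ptrace2 d (M + N) = ptrace2 d M + ptrace2 d N := by
  ext a b; simp [ptrace2, Finset.sum_add_distrib]

lemma ptrace2_smul (d : ℕ) (c : ℂ) (M : Matrix (Fin d × Fin 2) (Fin d × Fin 2) ℂ) :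
    ptrace2 d (c • M) = c • ptrace2 d M := by
  ext a b; simp [ptrace2, Finset.mul_sum]; ring

lemma ptrace2_kron (d : ℕ) (A : Matrix (Fin d) (Fin d) ℂ)
    (B : Matrix (Fin 2) (Fin 2) ℂ) :
    ptrace2 d (A ⊗ₖ B) = B.trace • A := by
  ext a b
  simp only [ptrace2, Matrix.of_apply, Matrix.kroneckerMap_apply, Matrix.smul_apply,
    Matrix.trace, Matrix.diag, smul_eq_mul, Finset.sum_mul]
  exact Finset.sum_congr rfl fun c _ => mul_comm _ _

/-- the key partial-trace computation on a triple product of Kronecker products -/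
lemma ptrace2_kmk (d : ℕ) (A C ρ : Matrix (Fin d) (Fin d) ℂ)
    (B D : Matrix (Fin 2) (Fin 2) ℂ) :
    ptrace2 d ((A ⊗ₖ B) * (ρ ⊗ₖ ((2 : ℂ)⁻¹ • (1 : Matrix (Fin 2) (Fin 2) ℂ))) * (C ⊗ₖ D))
      = ((2:ℂ)⁻¹ * (B * D).trace) • (A * ρ * C) := by
  rw [Matrix.kronecker_smul, Matrix.mul_smul, Matrix.smul_mul, ← Matrix.mul_kronecker_mul,
    ← Matrix.mul_kronecker_mul, Matrix.mul_one, ptrace2_smul, ptrace2_kron, smul_smul]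

/-- the spin operator part of `J2half` -/
noncomputable def Sop (d : ℕ) : Matrix (Fin d × Fin 2) (Fin d × Fin 2) ℂ :=
  Jx d ⊗ₖ Jx 2 + Jy d ⊗ₖ Jy 2 + Jz d ⊗ₖ Jz 2

lemma aux_kron_sq (d : ℕ) (A : Matrix (Fin d) (Fin d) ℂ) (B : Matrix (Fin 2) (Fin 2) ℂ) :
    (A ⊗ₖ (1 : Matrix (Fin 2) (Fin 2) ℂ) + (1 : Matrix (Fin d) (Fin d) ℂ) ⊗ₖ B) ^ 2
      = (A * A) ⊗ₖ (1 : Matrix (Fin 2) (Fin 2) ℂ) + (2:ℂ) • (A ⊗ₖ B)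
        + (1 : Matrix (Fin d) (Fin d) ℂ) ⊗ₖ (B * B) := by
  rw [sq]
  simp only [add_mul, mul_add, ← Matrix.mul_kronecker_mul, Matrix.mul_one, Matrix.one_mul]
  rw [two_smul]
  abel

lemma aux_J2half (d : ℕ) :
    J2half d = ((lam d + 3/4 : ℝ) : ℂ) • 1 + (2:ℂ) • Sop d := by
  have c2 : (3/4 : ℂ) = ((lam 2 : ℝ) : ℂ) := by norm_num [lam]
  rw [J2half, aux_kron_sq, aux_kron_sq, aux_kron_sq]
  have hd := aux_casimir d
  have h2 := aux_casimir 2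
  have key :
      (Jx d * Jx d) ⊗ₖ (1 : Matrix (Fin 2) (Fin 2) ℂ)
        + (Jy d * Jy d) ⊗ₖ (1 : Matrix (Fin 2) (Fin 2) ℂ)
        + (Jz d * Jz d) ⊗ₖ (1 : Matrix (Fin 2) (Fin 2) ℂ)
      = ((lam d : ℝ) : ℂ) • 1 := by
    rw [← Matrix.add_kronecker, ← Matrix.add_kronecker, hd, Matrix.smul_kronecker,
      Matrix.one_kronecker_one]
  have key2 :
      (1 : Matrix (Fin d) (Fin d) ℂ) ⊗ₖ (Jx 2 * Jx 2)
        + (1 : Matrix (Fin d) (Fin d) ℂ) ⊗ₖ (Jy 2 * Jy 2)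
        + (1 : Matrix (Fin d) (Fin d) ℂ) ⊗ₖ (Jz 2 * Jz 2)
      = ((lam 2 : ℝ) : ℂ) • 1 := by
    rw [← Matrix.kronecker_add, ← Matrix.kronecker_add, h2, Matrix.kronecker_smul,
      Matrix.one_kronecker_one]
  have hsplit : ((lam d + 3/4 : ℝ) : ℂ) = ((lam d : ℝ) : ℂ) + ((lam 2 : ℝ) : ℂ) := by
    rw [← c2]; push_cast; ring
  rw [hsplit, Sop]
  have := key
  have := key2
  calc (Jx d * Jx d) ⊗ₖ (1:Matrix (Fin 2) (Fin 2) ℂ) + (2:ℂ) • (Jx d ⊗ₖ Jx 2)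
        + (1:Matrix (Fin d) (Fin d) ℂ) ⊗ₖ (Jx 2 * Jx 2)
      + ((Jy d * Jy d) ⊗ₖ (1:Matrix (Fin 2) (Fin 2) ℂ) + (2:ℂ) • (Jy d ⊗ₖ Jy 2)
        + (1:Matrix (Fin d) (Fin d) ℂ) ⊗ₖ (Jy 2 * Jy 2))
      + ((Jz d * Jz d) ⊗ₖ (1:Matrix (Fin 2) (Fin 2) ℂ) + (2:ℂ) • (Jz d ⊗ₖ Jz 2)
        + (1:Matrix (Fin d) (Fin d) ℂ) ⊗ₖ (Jz 2 * Jz 2))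
      = ((Jx d * Jx d) ⊗ₖ (1:Matrix (Fin 2) (Fin 2) ℂ)
          + (Jy d * Jy d) ⊗ₖ (1:Matrix (Fin 2) (Fin 2) ℂ)
          + (Jz d * Jz d) ⊗ₖ (1:Matrix (Fin 2) (Fin 2) ℂ))
        + ((1:Matrix (Fin d) (Fin d) ℂ) ⊗ₖ (Jx 2 * Jx 2)
          + (1:Matrix (Fin d) (Fin d) ℂ) ⊗ₖ (Jy 2 * Jy 2)
          + (1:Matrix (Fin d) (Fin d) ℂ) ⊗ₖ (Jz 2 * Jz 2))
        + (2:ℂ) • (Jx d ⊗ₖ Jx 2 + Jy d ⊗ₖ Jy 2 + Jz d ⊗ₖ Jz 2) := by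
        simp only [smul_add]; abel
    _ = (((lam d : ℝ) : ℂ) + ((lam 2 : ℝ) : ℂ)) • 1
        + (2:ℂ) • (Jx d ⊗ₖ Jx 2 + Jy d ⊗ₖ Jy 2 + Jz d ⊗ₖ Jz 2) := by
        rw [key, key2, add_smul]

lemma aux_U (d : ℕ) (hd : 2 ≤ d) :
    (2:ℂ) • PiPlus d - 1
      = ((d:ℂ))⁻¹ • ((1 : Matrix (Fin d × Fin 2) (Fin d × Fin 2) ℂ) + (4:ℂ) • Sop d) := by
  have hd0 : ((d:ℝ)) ≠ 0 := by positivity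
  have hdc : ((d:ℂ)) ≠ 0 := by exact_mod_cast (Nat.cast_ne_zero (R := ℂ)).2 (by omega)
  have hc : ((2 * jr d + 1 : ℝ) : ℂ) = (d : ℂ) := by
    simp only [jr]; push_cast; ring
  rw [PiPlus, aux_J2half, hc]
  match_scalars
  · simp only [jr, lam]; push_cast; field_simp; ring
  · ring

lemma aux_mix (d : ℕ) (P M : Matrix (Fin d × Fin 2) (Fin d × Fin 2) ℂ) :
    P * M * P + (1 - P) * M * (1 - P)
      = (2:ℂ)⁻¹ • (M + ((2:ℂ) • P - 1) * M * ((2:ℂ) • P - 1)) := by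
  simp only [sub_mul, mul_sub, Matrix.smul_mul, Matrix.mul_smul, one_mul, mul_one,
    smul_sub, smul_add, smul_smul]
  module

lemma tr_one2 : (1 : Matrix (Fin 2) (Fin 2) ℂ).trace = 2 := by
  simp [Matrix.trace, Fin.sum_univ_two]
lemma trJx2 : (Jx 2).trace = 0 := by simp [aux_Jx2, Matrix.trace, Fin.sum_univ_two]
lemma trJy2 : (Jy 2).trace = 0 := by simp [aux_Jy2, Matrix.trace, Fin.sum_univ_two]
lemma trJz2 : (Jz 2).trace = 0 := by simp [aux_Jz2, Matrix.trace, Fin.sum_univ_two]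
lemma trJxJx : (Jx 2 * Jx 2).trace = 2⁻¹ := by
  simp [aux_Jx2, Matrix.trace, Matrix.mul_apply, Fin.sum_univ_two]; norm_num
lemma trJyJy : (Jy 2 * Jy 2).trace = 2⁻¹ := by
  simp [aux_Jy2, Matrix.trace, Matrix.mul_apply, Fin.sum_univ_two]; ring_nf
  simp [Complex.I_sq]; norm_num
lemma trJzJz : (Jz 2 * Jz 2).trace = 2⁻¹ := by
  simp [aux_Jz2, Matrix.trace, Matrix.mul_apply, Fin.sum_univ_two]; norm_num
lemma trJxJy : (Jx 2 * Jy 2).trace = 0 := by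
  simp [aux_Jx2, aux_Jy2, Matrix.trace, Matrix.mul_apply, Fin.sum_univ_two]
lemma trJyJx : (Jy 2 * Jx 2).trace = 0 := by
  simp [aux_Jx2, aux_Jy2, Matrix.trace, Matrix.mul_apply, Fin.sum_univ_two]
lemma trJxJz : (Jx 2 * Jz 2).trace = 0 := by
  simp [aux_Jx2, aux_Jz2, Matrix.trace, Matrix.mul_apply, Fin.sum_univ_two]
lemma trJzJx : (Jz 2 * Jx 2).trace = 0 := by
  simp [aux_Jx2, aux_Jz2, Matrix.trace, Matrix.mul_apply, Fin.sum_univ_two]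
lemma trJyJz : (Jy 2 * Jz 2).trace = 0 := by
  simp [aux_Jy2, aux_Jz2, Matrix.trace, Matrix.mul_apply, Fin.sum_univ_two]
lemma trJzJy : (Jz 2 * Jy 2).trace = 0 := by
  simp [aux_Jy2, aux_Jz2, Matrix.trace, Matrix.mul_apply, Fin.sum_univ_two]

lemma aux_EME (d : ℕ) (ρ : Matrix (Fin d) (Fin d) ℂ) :
    ptrace2 d
      (((1 : Matrix (Fin d) (Fin d) ℂ) ⊗ₖ (1 : Matrix (Fin 2) (Fin 2) ℂ) + (4:ℂ) • Sop d)
        * (ρ ⊗ₖ ((2 : ℂ)⁻¹ • (1 : Matrix (Fin 2) (Fin 2) ℂ)))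
        * ((1 : Matrix (Fin d) (Fin d) ℂ) ⊗ₖ (1 : Matrix (Fin 2) (Fin 2) ℂ) + (4:ℂ) • Sop d))
      = ρ + (4:ℂ) • (Jx d * ρ * Jx d + Jy d * ρ * Jy d + Jz d * ρ * Jz d) := by
  simp only [Sop, add_mul, mul_add, Matrix.smul_mul, Matrix.mul_smul, smul_add, smul_smul,
    ptrace2_add, ptrace2_smul, ptrace2_kmk, Matrix.one_mul, Matrix.mul_one,
    tr_one2, trJx2, trJy2, trJz2, trJxJx, trJyJy, trJzJz, trJxJy, trJyJx, trJxJz, trJzJx,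
    trJyJz, trJzJy, mul_zero, zero_smul, smul_zero, add_zero, zero_add]
  match_scalars <;> norm_num

end Aux

theorem stmt_17 (d : ℕ) (hd : 2 ≤ d) (ρ : Matrix (Fin d) (Fin d) ℂ) :
    ptrace2 d
      (PiPlus d * (ρ ⊗ₖ ((2 : ℂ)⁻¹ • (1 : Matrix (Fin 2) (Fin 2) ℂ))) * PiPlus d
       + PiMinus d * (ρ ⊗ₖ ((2 : ℂ)⁻¹ • (1 : Matrix (Fin 2) (Fin 2) ℂ))) * PiMinus d)
    = ((1 / 2 + 1 / (2 * (2 * jr d + 1) ^ 2) : ℝ) : ℂ) • ρ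
      + ((2 * jr d * (jr d + 1) / (2 * jr d + 1) ^ 2 : ℝ) : ℂ) • zeta d ρ := by
  have hdR : (2:ℝ) ≤ (d:ℝ) := by exact_mod_cast hd
  have hdR0 : (d:ℝ) ≠ 0 := by linarith
  have hdc : (d:ℂ) ≠ 0 := by
    simpa using Complex.ofReal_ne_zero.2 hdR0
  have hlamR : lam d ≠ 0 := by
    have : (0:ℝ) < ((d:ℝ)^2 - 1)/4 := by nlinarith
    simpa [lam] using this.ne'
  have hlam : ((lam d : ℝ) : ℂ) ≠ 0 := Complex.ofReal_ne_zero.2 hlamR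
  rw [PiMinus, aux_mix, aux_U d hd]
  simp only [Matrix.smul_mul, Matrix.mul_smul, smul_smul]
  rw [← Matrix.one_kronecker_one (α := ℂ) (m := Fin d) (n := Fin 2)]
  rw [ptrace2_smul, ptrace2_add, ptrace2_smul, aux_EME, ptrace2_kron]
  have htr : ((2:ℂ)⁻¹ • (1 : Matrix (Fin 2) (Fin 2) ℂ)).trace = 1 := by
    rw [Matrix.trace_smul, tr_one2]; norm_num
  rw [htr, one_smul]
  have e1 : ((1 / 2 + 1 / (2 * (2 * jr d + 1) ^ 2) : ℝ) : ℂ)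
      = 2⁻¹ + 2⁻¹ * (d:ℂ)⁻¹ * (d:ℂ)⁻¹ := by
    have : (1 / 2 + 1 / (2 * (2 * jr d + 1) ^ 2) : ℝ)
        = 2⁻¹ + 2⁻¹ * (d:ℝ)⁻¹ * (d:ℝ)⁻¹ := by
      simp only [jr]
      have h : (2 * (((d:ℝ) - 1) / 2) + 1) = d := by ring
      rw [h]; ring
    rw [this]; push_cast; ring
  have e2 : ((2 * jr d * (jr d + 1) / (2 * jr d + 1) ^ 2 : ℝ) : ℂ)
      = 2 * ((lam d : ℝ) : ℂ) * (d:ℂ)⁻¹ * (d:ℂ)⁻¹ := by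
    have : (2 * jr d * (jr d + 1) / (2 * jr d + 1) ^ 2 : ℝ)
        = 2 * lam d * (d:ℝ)⁻¹ * (d:ℝ)⁻¹ := by
      simp only [jr, lam]
      have h : (2 * (((d:ℝ) - 1) / 2) + 1) = d := by ring
      rw [h]; ring
    rw [this]; push_cast; ring
  rw [e1, e2, zeta]
  match_scalars <;> field_simp <;> ring
end

section
/- Assume d ≥ 3. For every d×d complex matrix ρ with Tr ρ = 1 and ρ J_z = J_z ρ, the probability of correctly identifying a known spin-1 state using the total-angular-momentum measurement satisfies (1/3) Σ_{μ∈{−1,0,1}} Tr[ Π_{j+μ} (ρ ⊗ f_{μ+1} f_{μ+1}†) ] = 1/6 + ((2j+1)² − 2)/(6 j (j+1) (2j+1)) · Tr[ρ J_z] + 1/(2 j (j+1)) · Tr[ρ J_z²], where f_0, f_1, f_2 ∈ ℂ³ are the K_z-eigenvectors with eigenvalues −1, 0, +1 respectively. -/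
open Matrix Complex Kronecker
open scoped ComplexOrder

/-- total angular momentum squared 𝒥² on ℂ^d ⊗ ℂ³ -/
noncomputable def J2one (d : ℕ) : Matrix (Fin d × Fin 3) (Fin d × Fin 3) ℂ :=
  (Jx d ⊗ₖ (1 : Matrix (Fin 3) (Fin 3) ℂ) + (1 : Matrix (Fin d) (Fin d) ℂ) ⊗ₖ Jx 3) ^ 2
  + (Jy d ⊗ₖ (1 : Matrix (Fin 3) (Fin 3) ℂ) + (1 : Matrix (Fin d) (Fin d) ℂ) ⊗ₖ Jy 3) ^ 2
  + (Jz d ⊗ₖ (1 : Matrix (Fin 3) (Fin 3) ℂ) + (1 : Matrix (Fin d) (Fin d) ℂ) ⊗ₖ Jz 3) ^ 2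

/-- λ_μ = (j+μ)(j+μ+1) -/
noncomputable def lamMu (d : ℕ) (μ : ℤ) : ℝ := (jr d + μ) * (jr d + μ + 1)

/-- Lagrange interpolation projector onto total angular momentum j+μ,
where ν₁, ν₂ are the two other values of μ in {-1,0,1}. -/
noncomputable def lagProj (d : ℕ) (μ ν₁ ν₂ : ℤ) :
    Matrix (Fin d × Fin 3) (Fin d × Fin 3) ℂ :=
  (((lamMu d μ - lamMu d ν₁) * (lamMu d μ - lamMu d ν₂) : ℝ) : ℂ)⁻¹ •
    ((J2one d - ((lamMu d ν₁ : ℝ) : ℂ) • (1 : Matrix (Fin d × Fin 3) (Fin d × Fin 3) ℂ))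
      * (J2one d - ((lamMu d ν₂ : ℝ) : ℂ) • (1 : Matrix (Fin d × Fin 3) (Fin d × Fin 3) ℂ)))

/-- projector onto total angular momentum j-1 -/
noncomputable def ProjM1 (d : ℕ) := lagProj d (-1) 0 1
/-- projector onto total angular momentum j -/
noncomputable def Proj0 (d : ℕ) := lagProj d 0 (-1) 1
/-- projector onto total angular momentum j+1 -/
noncomputable def ProjP1 (d : ℕ) := lagProj d 1 (-1) 0


section AuxLemmas

lemma sq_entry (d b : ℕ) (h : b + 1 ≤ d) :
    ((Real.sqrt ((b + 1) * ((d : ℝ) - 1 - b)) : ℂ)) *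
    ((Real.sqrt ((b + 1) * ((d : ℝ) - 1 - b)) : ℂ))
      = (((b : ℝ) + 1) * ((d : ℝ) - 1 - b) : ℝ) := by
  rw [← Complex.ofReal_mul, Real.mul_self_sqrt]
  have hb : ((b : ℝ)) ≤ (d : ℝ) - 1 := by
    have := (Nat.cast_le (α := ℝ)).2 h
    push_cast at this; linarith
  have h1 : (0:ℝ) ≤ (b:ℝ) + 1 := by positivity
  nlinarith

lemma JpJm_eq (d : ℕ) : Jp d * Jm d
    = Matrix.diagonal (fun m : Fin d => ((m : ℕ) : ℂ) * ((d : ℂ) - (m : ℕ))) := by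
  ext a b
  simp only [Matrix.mul_apply, Jm, Matrix.conjTranspose_apply, Jp, Matrix.of_apply]
  by_cases hab : a = b
  · subst hab
    simp only [Matrix.diagonal_apply_eq]
    by_cases h0 : (a : ℕ) = 0
    · rw [Finset.sum_eq_zero]
      · simp [h0]
      · intro c _
        simp [h0]
    · obtain ⟨a', ha'⟩ := Nat.exists_eq_succ_of_ne_zero h0
      have ha'lt : a' < d := by omega
      rw [Finset.sum_eq_single (⟨a', ha'lt⟩ : Fin d)]
      · have hc : ((⟨a', ha'lt⟩ : Fin d) : ℕ) = a' := rfl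
        rw [hc, if_pos (by omega)]
        rw [Complex.star_def, Complex.conj_ofReal]
        rw [sq_entry d a' (by omega)]
        have : ((a : ℕ) : ℂ) = (a' : ℂ) + 1 := by push_cast [ha']; ring
        rw [this]
        push_cast
        ring
      · intro c _ hc
        have hcv : (c : ℕ) ≠ a' := fun h => hc (Fin.ext h)
        have : ¬ ((a : ℕ) = (c : ℕ) + 1) := by omega
        simp [this]
      · intro h; exact absurd (Finset.mem_univ _) h
  · rw [Matrix.diagonal_apply_ne _ hab, Finset.sum_eq_zero]
    intro c _
    by_cases h1 : (a : ℕ) = (c : ℕ) + 1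
    · have : ¬ ((b : ℕ) = (c : ℕ) + 1) := fun h => hab (Fin.ext (by omega))
      simp [this]
    · simp [h1]

lemma JmJp_eq (d : ℕ) : Jm d * Jp d
    = Matrix.diagonal (fun m : Fin d => (((m : ℕ) : ℂ) + 1) * ((d : ℂ) - 1 - (m : ℕ))) := by
  ext a b
  simp only [Matrix.mul_apply, Jm, Matrix.conjTranspose_apply, Jp, Matrix.of_apply]
  by_cases hab : a = b
  · subst hab
    simp only [Matrix.diagonal_apply_eq]
    by_cases h0 : (a : ℕ) + 1 < d
    · rw [Finset.sum_eq_single (⟨(a : ℕ) + 1, h0⟩ : Fin d)]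
      · have hc : ((⟨(a : ℕ) + 1, h0⟩ : Fin d) : ℕ) = (a : ℕ) + 1 := rfl
        rw [hc, if_pos rfl]
        rw [Complex.star_def, Complex.conj_ofReal]
        rw [sq_entry d (a : ℕ) (by omega)]
        push_cast
        ring
      · intro c _ hc
        have hcv : (c : ℕ) ≠ (a : ℕ) + 1 := fun h => hc (Fin.ext h)
        simp [hcv]
      · intro h; exact absurd (Finset.mem_univ _) h
    · have hda : (a : ℕ) = d - 1 := by have := a.is_lt; omega
      rw [Finset.sum_eq_zero]
      · have : ((d : ℂ) - 1 - ((a : ℕ) : ℂ)) = 0 := by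
          have hd1 : 1 ≤ d := by have := a.is_lt; omega
          rw [hda]
          push_cast [hd1]
          ring
        rw [this, mul_zero]
      · intro c _
        have : ¬ ((c : ℕ) = (a : ℕ) + 1) := by have := c.is_lt; omega
        simp [this]
  · rw [Matrix.diagonal_apply_ne _ hab, Finset.sum_eq_zero]
    intro c _
    by_cases h1 : (c : ℕ) = (a : ℕ) + 1
    · have : ¬ ((c : ℕ) = (b : ℕ) + 1) := fun h => hab (Fin.ext (by omega))
      simp [this]
    · simp [h1]

lemma Jp_diag (d : ℕ) (m : Fin d) : Jp d m m = 0 := by simp [Jp]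

lemma Jm_diag (d : ℕ) (m : Fin d) : Jm d m m = 0 := by simp [Jm, Jp]

lemma JpJp_diag (d : ℕ) (m : Fin d) : (Jp d * Jp d) m m = 0 := by
  rw [Matrix.mul_apply, Finset.sum_eq_zero]
  intro c _
  simp only [Jp, Matrix.of_apply]
  by_cases h1 : (m : ℕ) = (c : ℕ) + 1
  · have : ¬ ((c : ℕ) = (m : ℕ) + 1) := by omega
    simp [this]
  · simp [h1]

lemma JmJm_diag (d : ℕ) (m : Fin d) : (Jm d * Jm d) m m = 0 := by
  rw [Matrix.mul_apply, Finset.sum_eq_zero]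
  intro c _
  simp only [Jm, Jp, Matrix.conjTranspose_apply, Matrix.of_apply]
  by_cases h1 : (c : ℕ) = (m : ℕ) + 1
  · have : ¬ ((m : ℕ) = (c : ℕ) + 1) := by omega
    simp [this]
  · simp [h1]

lemma twoI_inv_sq : ((2 * Complex.I)⁻¹) * ((2 * Complex.I)⁻¹) = -(4⁻¹ : ℂ) := by
  rw [← mul_inv]
  have : (2 * Complex.I) * (2 * Complex.I) = -4 := by
    have := Complex.I_mul_I
    ring_nf
    rw [Complex.I_sq]
    ring
  rw [this]
  norm_num

lemma JxJy_sq (d : ℕ) :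
    Jx d ^ 2 + Jy d ^ 2 = (2:ℂ)⁻¹ • (Jp d * Jm d + Jm d * Jp d) := by
  have h1 : (Jp d + Jm d) * (Jp d + Jm d)
      = Jp d * Jp d + (Jp d * Jm d + Jm d * Jp d) + Jm d * Jm d := by noncomm_ring
  have h2 : (Jp d - Jm d) * (Jp d - Jm d)
      = Jp d * Jp d - (Jp d * Jm d + Jm d * Jp d) + Jm d * Jm d := by noncomm_ring
  rw [Jx, Jy, pow_two, pow_two, smul_mul_assoc, smul_mul_assoc, mul_smul_comm, mul_smul_comm,
    smul_smul, smul_smul, twoI_inv_sq, h1, h2]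
  module

lemma casimir (d : ℕ) :
    Jx d ^ 2 + Jy d ^ 2 + Jz d ^ 2 = ((lam d : ℝ) : ℂ) • 1 := by
  rw [JxJy_sq, JpJm_eq, JmJp_eq, Jz, pow_two, Matrix.diagonal_mul_diagonal]
  ext a b
  rcases eq_or_ne a b with rfl | h
  · simp only [Matrix.add_apply, Matrix.smul_apply, Matrix.diagonal_apply_eq,
      Matrix.one_apply_eq, smul_eq_mul, lam]
    push_cast
    ring
  · simp [Matrix.diagonal_apply_ne _ h, Matrix.one_apply_ne h]

lemma casimir3 : Jx 3 ^ 2 + Jy 3 ^ 2 + Jz 3 ^ 2 = (2 : ℂ) • 1 := by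
  have := casimir 3
  rw [this]
  norm_num [lam]

lemma sq_kron (d : ℕ) (A : Matrix (Fin d) (Fin d) ℂ) (B : Matrix (Fin 3) (Fin 3) ℂ) :
    (A ⊗ₖ (1 : Matrix (Fin 3) (Fin 3) ℂ) + (1 : Matrix (Fin d) (Fin d) ℂ) ⊗ₖ B) ^ 2
      = (A ^ 2) ⊗ₖ (1 : Matrix (Fin 3) (Fin 3) ℂ) + (2:ℂ) • (A ⊗ₖ B)
        + (1 : Matrix (Fin d) (Fin d) ℂ) ⊗ₖ (B ^ 2) := by
  rw [pow_two, add_mul, mul_add, mul_add, ← Matrix.mul_kronecker_mul, ← Matrix.mul_kronecker_mul,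
    ← Matrix.mul_kronecker_mul, ← Matrix.mul_kronecker_mul, one_mul, mul_one, one_mul, mul_one,
    ← pow_two, ← pow_two, two_smul]
  simp only [one_mul, mul_one, one_pow, ← pow_two]
  abel

lemma sub_kron {n m p q : Type*} (A B : Matrix n m ℂ) (C : Matrix p q ℂ) :
    (A - B) ⊗ₖ C = A ⊗ₖ C - B ⊗ₖ C := by
  ext ⟨i,k⟩ ⟨j,l⟩
  simp [Matrix.kroneckerMap_apply, Matrix.sub_apply, sub_mul]

lemma kron_sub {n m p q : Type*} (A : Matrix n m ℂ) (B C : Matrix p q ℂ) :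
    A ⊗ₖ (B - C) = A ⊗ₖ B - A ⊗ₖ C := by
  ext ⟨i,k⟩ ⟨j,l⟩
  simp [Matrix.kroneckerMap_apply, Matrix.sub_apply, mul_sub]

lemma cross_eq (d : ℕ) :
    Jx d ⊗ₖ Jx 3 + Jy d ⊗ₖ Jy 3
      = (2:ℂ)⁻¹ • (Jp d ⊗ₖ Jm 3 + Jm d ⊗ₖ Jp 3) := by
  rw [Jx, Jx, Jy, Jy, Matrix.smul_kronecker, Matrix.kronecker_smul,
    Matrix.smul_kronecker, Matrix.kronecker_smul, smul_smul, smul_smul, twoI_inv_sq,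
    Matrix.add_kronecker, Matrix.kronecker_add, Matrix.kronecker_add,
    sub_kron, kron_sub, kron_sub]
  module

lemma J2one_eq (d : ℕ) :
    J2one d = (((lam d : ℝ) : ℂ) + 2) • 1 + (2:ℂ) • (Jz d ⊗ₖ Jz 3)
      + (Jp d ⊗ₖ Jm 3 + Jm d ⊗ₖ Jp 3) := by
  have hJ : (Jx d ^ 2 + Jy d ^ 2 + Jz d ^ 2) ⊗ₖ (1 : Matrix (Fin 3) (Fin 3) ℂ)
      = ((lam d : ℝ) : ℂ) • (1 : Matrix (Fin d × Fin 3) (Fin d × Fin 3) ℂ) := by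
    rw [casimir, Matrix.smul_kronecker, Matrix.one_kronecker_one]
  have hK : (1 : Matrix (Fin d) (Fin d) ℂ) ⊗ₖ (Jx 3 ^ 2 + Jy 3 ^ 2 + Jz 3 ^ 2)
      = (2 : ℂ) • (1 : Matrix (Fin d × Fin 3) (Fin d × Fin 3) ℂ) := by
    rw [casimir3, Matrix.kronecker_smul, Matrix.one_kronecker_one]
  rw [J2one, sq_kron, sq_kron, sq_kron]
  have step1 :
      (Jx d ^ 2) ⊗ₖ (1 : Matrix (Fin 3) (Fin 3) ℂ) + (2:ℂ) • (Jx d ⊗ₖ Jx 3)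
        + (1 : Matrix (Fin d) (Fin d) ℂ) ⊗ₖ (Jx 3 ^ 2)
      + ((Jy d ^ 2) ⊗ₖ (1 : Matrix (Fin 3) (Fin 3) ℂ) + (2:ℂ) • (Jy d ⊗ₖ Jy 3)
        + (1 : Matrix (Fin d) (Fin d) ℂ) ⊗ₖ (Jy 3 ^ 2))
      + ((Jz d ^ 2) ⊗ₖ (1 : Matrix (Fin 3) (Fin 3) ℂ) + (2:ℂ) • (Jz d ⊗ₖ Jz 3)
        + (1 : Matrix (Fin d) (Fin d) ℂ) ⊗ₖ (Jz 3 ^ 2))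
      = (Jx d ^ 2 + Jy d ^ 2 + Jz d ^ 2) ⊗ₖ (1 : Matrix (Fin 3) (Fin 3) ℂ)
        + ((2:ℂ) • ((Jx d ⊗ₖ Jx 3 + Jy d ⊗ₖ Jy 3)) + (2:ℂ) • (Jz d ⊗ₖ Jz 3))
        + (1 : Matrix (Fin d) (Fin d) ℂ) ⊗ₖ (Jx 3 ^ 2 + Jy 3 ^ 2 + Jz 3 ^ 2) := by
    rw [Matrix.add_kronecker, Matrix.add_kronecker, Matrix.kronecker_add,
      Matrix.kronecker_add, smul_add]
    abel
  rw [step1, hJ, hK, cross_eq, smul_smul]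
  have h2 : (2:ℂ) * 2⁻¹ = 1 := by norm_num
  rw [h2, one_smul]
  module

lemma Jz_diag (d : ℕ) (m : Fin d) : Jz d m m = (m : ℂ) - ((d : ℂ) - 1) / 2 := by
  rw [Jz, Matrix.diagonal_apply_eq]

lemma JzJp_diag (d : ℕ) (m : Fin d) : (Jz d * Jp d) m m = 0 := by
  rw [Jz, Matrix.diagonal_mul, Jp_diag, mul_zero]

lemma JpJz_diag (d : ℕ) (m : Fin d) : (Jp d * Jz d) m m = 0 := by
  rw [Jz, Matrix.mul_diagonal, Jp_diag, zero_mul]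

lemma JzJm_diag (d : ℕ) (m : Fin d) : (Jz d * Jm d) m m = 0 := by
  rw [Jz, Matrix.diagonal_mul, Jm_diag, mul_zero]

lemma JmJz_diag (d : ℕ) (m : Fin d) : (Jm d * Jz d) m m = 0 := by
  rw [Jz, Matrix.mul_diagonal, Jm_diag, zero_mul]

lemma JzJz_diag (d : ℕ) (m : Fin d) :
    (Jz d * Jz d) m m = ((m : ℂ) - ((d : ℂ) - 1) / 2) * ((m : ℂ) - ((d : ℂ) - 1) / 2) := by
  rw [Jz, Matrix.diagonal_mul_diagonal, Matrix.diagonal_apply_eq]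

lemma N_expand (d : ℕ) (b c : ℂ) :
    (J2one d - b • 1) * (J2one d - c • 1)
    = ((((lam d : ℝ) : ℂ) + 2 - b) * (((lam d : ℝ) : ℂ) + 2 - c)) • 1
      + ((((lam d : ℝ) : ℂ) + 2 - b) + (((lam d : ℝ) : ℂ) + 2 - c)) •
          ((2:ℂ) • (Jz d ⊗ₖ Jz 3) + (Jp d ⊗ₖ Jm 3 + Jm d ⊗ₖ Jp 3))
      + (4:ℂ) • ((Jz d * Jz d) ⊗ₖ (Jz 3 * Jz 3))
      + (2:ℂ) • ((Jz d * Jp d) ⊗ₖ (Jz 3 * Jm 3)) + (2:ℂ) • ((Jz d * Jm d) ⊗ₖ (Jz 3 * Jp 3))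
      + (2:ℂ) • ((Jp d * Jz d) ⊗ₖ (Jm 3 * Jz 3)) + (2:ℂ) • ((Jm d * Jz d) ⊗ₖ (Jp 3 * Jz 3))
      + (Jp d * Jp d) ⊗ₖ (Jm 3 * Jm 3) + (Jp d * Jm d) ⊗ₖ (Jm 3 * Jp 3)
      + (Jm d * Jp d) ⊗ₖ (Jp 3 * Jm 3) + (Jm d * Jm d) ⊗ₖ (Jp 3 * Jp 3) := by
  rw [J2one_eq]
  simp only [sub_mul, mul_sub, add_mul, mul_add, smul_mul_assoc, mul_smul_comm, smul_smul,
    Matrix.mul_one, Matrix.one_mul, ← Matrix.mul_kronecker_mul]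
  module

lemma N_diag (d : ℕ) (b c : ℂ) (m : Fin d) (k : Fin 3) :
    ((J2one d - b • 1) * (J2one d - c • 1)) (m, k) (m, k)
    = ((((lam d : ℝ) : ℂ) + 2 - b) * (((lam d : ℝ) : ℂ) + 2 - c))
      + ((((lam d : ℝ) : ℂ) + 2 - b) + (((lam d : ℝ) : ℂ) + 2 - c)) *
          (2 * (((m : ℂ) - ((d : ℂ) - 1) / 2) * ((k : ℂ) - ((3 : ℂ) - 1) / 2)))
      + 4 * ((((m : ℂ) - ((d : ℂ) - 1) / 2) * ((m : ℂ) - ((d : ℂ) - 1) / 2))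
              * (((k : ℂ) - ((3 : ℂ) - 1) / 2) * ((k : ℂ) - ((3 : ℂ) - 1) / 2)))
      + (((m : ℕ) : ℂ) * ((d : ℂ) - ((m : ℕ) : ℂ)))
          * ((((k : ℕ) : ℂ) + 1) * ((3 : ℂ) - 1 - ((k : ℕ) : ℂ)))
      + ((((m : ℕ) : ℂ) + 1) * ((d : ℂ) - 1 - ((m : ℕ) : ℂ)))
          * (((k : ℕ) : ℂ) * ((3 : ℂ) - ((k : ℕ) : ℂ))) := by
  rw [N_expand]
  simp only [Matrix.add_apply, Matrix.smul_apply, Matrix.kroneckerMap_apply,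
    Matrix.one_apply_eq, smul_eq_mul, Jz_diag, Jp_diag, Jm_diag, JzJz_diag, JzJp_diag,
    JpJz_diag, JzJm_diag, JmJz_diag, JpJp_diag, JmJm_diag, JpJm_eq, JmJp_eq,
    Matrix.diagonal_apply_eq, mul_zero, zero_mul, add_zero, mul_one]
  ring

lemma stdBasis_diag (k0 : Fin 3) :
    Matrix.single k0 k0 (1:ℂ)
      = Matrix.diagonal (fun k => if k = k0 then (1:ℂ) else 0) := by
  ext a b
  simp only [Matrix.single, Matrix.of_apply, Matrix.diagonal_apply]
  by_cases h : a = b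
  · subst h
    by_cases h2 : a = k0
    · simp [h2]
    · simp [h2, Ne.symm h2]
  · have h2 : ¬ (k0 = a ∧ k0 = b) := by rintro ⟨rfl, rfl⟩; exact h rfl
    simp only [if_neg h, if_neg h2]

lemma trace_term (d : ℕ) (μ ν₁ ν₂ : ℤ) (k0 : Fin 3) (ρ : Matrix (Fin d) (Fin d) ℂ)
    (hρd : ∀ a b, a ≠ b → ρ a b = 0) :
    Matrix.trace (lagProj d μ ν₁ ν₂ * (ρ ⊗ₖ Matrix.single k0 k0 (1:ℂ)))
    = (((lamMu d μ - lamMu d ν₁) * (lamMu d μ - lamMu d ν₂) : ℝ) : ℂ)⁻¹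
      * ∑ m : Fin d, ρ m m *
        ((J2one d - ((lamMu d ν₁ : ℝ) : ℂ) • 1)
          * (J2one d - ((lamMu d ν₂ : ℝ) : ℂ) • 1)) (m, k0) (m, k0) := by
  have hρ' : ρ = Matrix.diagonal (fun m => ρ m m) := by
    ext a b
    rcases eq_or_ne a b with rfl | h
    · simp
    · rw [Matrix.diagonal_apply_ne _ h, hρd a b h]
  rw [lagProj, Matrix.smul_mul, Matrix.trace_smul, smul_eq_mul]
  congr 1
  conv_lhs => rw [hρ', stdBasis_diag, Matrix.diagonal_kronecker_diagonal]
  rw [Matrix.trace]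
  simp only [Matrix.diag_apply, Matrix.mul_diagonal]
  rw [Fintype.sum_prod_type]
  refine Finset.sum_congr rfl (fun m _ => ?_)
  rw [Finset.sum_eq_single k0]
  · simp [mul_comm]
  · intro k _ hk; simp [hk]
  · intro h; exact absurd (Finset.mem_univ _) h

end AuxLemmas


set_option maxHeartbeats 2000000 in
theorem stmt_18 (d : ℕ) (hd : 3 ≤ d)
    (ρ : Matrix (Fin d) (Fin d) ℂ) (hρ : Matrix.trace ρ = 1)
    (hcomm : ρ * Jz d = Jz d * ρ) :
    (3 : ℂ)⁻¹ *
      (Matrix.trace (ProjM1 d * (ρ ⊗ₖ Matrix.single (0 : Fin 3) (0 : Fin 3) (1 : ℂ)))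
       + Matrix.trace (Proj0 d * (ρ ⊗ₖ Matrix.single (1 : Fin 3) (1 : Fin 3) (1 : ℂ)))
       + Matrix.trace (ProjP1 d * (ρ ⊗ₖ Matrix.single (2 : Fin 3) (2 : Fin 3) (1 : ℂ))))
    = 1 / 6
      + ((((2 * jr d + 1) ^ 2 - 2) / (6 * jr d * (jr d + 1) * (2 * jr d + 1)) : ℝ) : ℂ)
          * Matrix.trace (ρ * Jz d)
      + ((1 / (2 * jr d * (jr d + 1)) : ℝ) : ℂ) * Matrix.trace (ρ * (Jz d) ^ 2) := by
  have hρd : ∀ a b : Fin d, a ≠ b → ρ a b = 0 := by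
    intro a b h
    have hab : (ρ * Jz d) a b = (Jz d * ρ) a b := by rw [hcomm]
    rw [Jz, Matrix.mul_diagonal, Matrix.diagonal_mul] at hab
    have h2 : ρ a b * ((b : ℂ) - (a : ℂ)) = 0 := by linear_combination hab
    rcases mul_eq_zero.mp h2 with h3 | h3
    · exact h3
    · exfalso
      have h4 : ((b : Fin d) : ℂ) = ((a : Fin d) : ℂ) := by linear_combination h3
      have h5 : ((b : ℕ) : ℂ) = ((a : ℕ) : ℂ) := h4
      exact h (Fin.ext (Nat.cast_injective h5).symm)
  have hTr1 : ∑ m : Fin d, ρ m m = 1 := by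
    rw [← hρ]; rfl
  have hTz : Matrix.trace (ρ * Jz d)
      = ∑ m : Fin d, ρ m m * ((m : ℂ) - ((d : ℂ) - 1) / 2) := by
    rw [Jz, Matrix.trace]
    simp [Matrix.diag_apply, Matrix.mul_diagonal]
  have hJz2 : Jz d ^ 2
      = Matrix.diagonal (fun m : Fin d =>
          ((m : ℂ) - ((d : ℂ) - 1) / 2) * ((m : ℂ) - ((d : ℂ) - 1) / 2)) := by
    rw [pow_two, Jz, Matrix.diagonal_mul_diagonal]
  have hTz2 : Matrix.trace (ρ * (Jz d) ^ 2)
      = ∑ m : Fin d, ρ m m * (((m : ℂ) - ((d : ℂ) - 1) / 2) * ((m : ℂ) - ((d : ℂ) - 1) / 2)) := by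
    rw [hJz2, Matrix.trace]
    simp [Matrix.diag_apply, Matrix.mul_diagonal]
  rw [ProjM1, Proj0, ProjP1,
    trace_term d (-1) 0 1 (0 : Fin 3) ρ hρd,
    trace_term d 0 (-1) 1 (1 : Fin 3) ρ hρd,
    trace_term d 1 (-1) 0 (2 : Fin 3) ρ hρd,
    hTz, hTz2]
  simp only [N_diag]
  have h16 : (1 / 6 : ℂ) = ∑ m : Fin d, ρ m m * (1 / 6) := by
    rw [← Finset.sum_mul, hTr1, one_mul]
  rw [h16, Finset.mul_sum, Finset.mul_sum, Finset.mul_sum, Finset.mul_sum, Finset.mul_sum,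
    ← Finset.sum_add_distrib, ← Finset.sum_add_distrib,
    ← Finset.sum_add_distrib, ← Finset.sum_add_distrib, Finset.mul_sum]
  refine Finset.sum_congr rfl (fun m _ => ?_)
  have hd3 : (3:ℝ) ≤ (d:ℝ) := by exact_mod_cast hd
  have h1 : ((d:ℂ) - 1) ≠ 0 := by
    have : ((d:ℝ) - 1) ≠ 0 := by linarith
    intro hc
    apply this
    have := congrArg Complex.re hc
    simpa using this
  have h2 : ((d:ℂ) + 1) ≠ 0 := by
    have : ((d:ℝ) + 1) ≠ 0 := by linarith
    intro hc
    apply this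
    have := congrArg Complex.re hc
    simpa using this
  have h3 : ((d:ℂ)) ≠ 0 := by
    have : ((d:ℝ)) ≠ 0 := by linarith
    intro hc
    apply this
    have := congrArg Complex.re hc
    simpa using this
  have eA : ((lam d : ℝ) : ℂ) = ((d:ℂ)^2 - 1)/4 := by
    simp only [lam]; push_cast; ring
  have eM : ((lamMu d (-1) : ℝ) : ℂ) = ((d:ℂ) - 3)*((d:ℂ) - 1)/4 := by
    simp only [lamMu, jr]; push_cast; ring
  have e0 : ((lamMu d 0 : ℝ) : ℂ) = ((d:ℂ) - 1)*((d:ℂ) + 1)/4 := by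
    simp only [lamMu, jr]; push_cast; ring
  have eP : ((lamMu d 1 : ℝ) : ℂ) = ((d:ℂ) + 1)*((d:ℂ) + 3)/4 := by
    simp only [lamMu, jr]; push_cast; ring
  have e1 : (((lamMu d (-1) - lamMu d 0) * (lamMu d (-1) - lamMu d 1) : ℝ) : ℂ)
      = 2 * (d:ℂ) * ((d:ℂ) - 1) := by
    simp only [lamMu, jr]; push_cast; ring
  have e2 : (((lamMu d 0 - lamMu d (-1)) * (lamMu d 0 - lamMu d 1) : ℝ) : ℂ)
      = -(((d:ℂ) - 1) * ((d:ℂ) + 1)) := by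
    simp only [lamMu, jr]; push_cast; ring
  have e3 : (((lamMu d 1 - lamMu d (-1)) * (lamMu d 1 - lamMu d 0) : ℝ) : ℂ)
      = 2 * (d:ℂ) * ((d:ℂ) + 1) := by
    simp only [lamMu, jr]; push_cast; ring
  have h6 : (((d:ℂ) - 1) * ((d:ℂ) + 1)) ≠ 0 := mul_ne_zero h1 h2
  have e4 : ((((2 * jr d + 1) ^ 2 - 2) / (6 * jr d * (jr d + 1) * (2 * jr d + 1)) : ℝ) : ℂ)
      = (2 * ((d:ℂ)^2 - 2)) / (3 * (d:ℂ) * (((d:ℂ) - 1) * ((d:ℂ) + 1))) := by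
    have hA : (6 * (((d:ℂ) - 1) / 2) * (((d:ℂ) - 1) / 2 + 1) * (2 * (((d:ℂ) - 1) / 2) + 1)) ≠ 0 := by
      have hh : (6 * (((d:ℂ) - 1) / 2) * (((d:ℂ) - 1) / 2 + 1) * (2 * (((d:ℂ) - 1) / 2) + 1))
          = 6 * (((d:ℂ) - 1) * (((d:ℂ) + 1) * (d:ℂ))) / 4 := by ring
      rw [hh]
      apply div_ne_zero _ (by norm_num)
      exact mul_ne_zero (by norm_num) (mul_ne_zero h1 (mul_ne_zero h2 h3))
    have hB : (3 * (d:ℂ) * (((d:ℂ) - 1) * ((d:ℂ) + 1))) ≠ 0 :=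
      mul_ne_zero (mul_ne_zero (by norm_num) h3) h6
    simp only [jr]; push_cast
    rw [div_eq_div_iff hA hB]
    ring
  have e5 : ((1 / (2 * jr d * (jr d + 1)) : ℝ) : ℂ)
      = 2 / (((d:ℂ) - 1) * ((d:ℂ) + 1)) := by
    have hA : (2 * (((d:ℂ) - 1) / 2) * (((d:ℂ) - 1) / 2 + 1)) ≠ 0 := by
      have hh : (2 * (((d:ℂ) - 1) / 2) * (((d:ℂ) - 1) / 2 + 1))
          = ((d:ℂ) - 1) * ((d:ℂ) + 1) / 2 := by ring
      rw [hh]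
      exact div_ne_zero h6 (by norm_num)
    simp only [jr]; push_cast
    rw [div_eq_div_iff hA h6]
    ring
  simp only [eA, eM, e0, eP, e1, e2, e3, e4, e5]
  have h4 : (2 * (d:ℂ) * ((d:ℂ) - 1)) ≠ 0 := by
    intro hc
    rcases mul_eq_zero.mp hc with hc | hc
    · rcases mul_eq_zero.mp hc with hc | hc
      · norm_num at hc
      · exact h3 hc
    · exact h1 hc
  have h5 : (2 * (d:ℂ) * ((d:ℂ) + 1)) ≠ 0 := by
    intro hc
    rcases mul_eq_zero.mp hc with hc | hc
    · rcases mul_eq_zero.mp hc with hc | hc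
      · norm_num at hc
      · exact h3 hc
    · exact h2 hc
  simp only [show ((0:Fin 3):ℕ) = 0 from rfl, show ((1:Fin 3):ℕ) = 1 from rfl,
    show ((2:Fin 3):ℕ) = 2 from rfl, Nat.cast_zero, Nat.cast_one, Nat.cast_ofNat]
  field_simp
  ring
end
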